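/- Let S : Fin n → α and P : Fin m → β be sequences over linear orders. Then the number of positions i at which P has an order-preserving occurrence in S equals the number of positions i with i + m ≤ n such that E(P) is a prefix of the rank encoding of the suffix of S starting at i (i.e., for all j < m, E(j ↦ S(i+j), of length n−i)(j) = E(P)(j)). (This is why the number of order-preserving occurrences of P equals the size of the range of suffixes whose encodings are prefixed by E(P).) -/

import Mathlib

/- The rank encoding `E(s)` of a sequence `s : Fin m → α` over a linear order:
`E(s)(i) = d_i + 1` if `s i` equals some earlier character, and `d_i + 1/2` otherwise,
where `d_i` is the number of distinct values among `s 0, …, s (i-1)` strictly smaller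
than `s i`. -/
open Classical in
noncomputable def rankEncode {m : ℕ} {α : Type*} [LinearOrder α] (s : Fin m → α) :
    Fin m → ℚ := fun i =>
  ((((Finset.univ : Finset (Fin m)).filter (fun j : Fin m => (j : ℕ) < (i : ℕ))).image s).filter
      (fun a => a < s i)).card +
    (if ∃ j : Fin m, (j : ℕ) < (i : ℕ) ∧ s j = s i then 1 else 1/2)
/-- Two sequences of the same length over linear orders are order-isomorphic if
their characters compare the same way at every pair of positions. -/
def OrderIsoSeq {m : ℕ} {α β : Type*} [LinearOrder α] [LinearOrder β]
    (s : Fin m → α) (t : Fin m → β) : Prop :=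
  ∀ i j : Fin m, s i ≤ s j ↔ t i ≤ t j

/-- `P` has an order-preserving occurrence at position `i` in `S` if `i + m ≤ n` and
`P` is order-isomorphic to the window of `S` of length `m` starting at `i`. -/
def OPOccurAt {n m : ℕ} {α β : Type*} [LinearOrder α] [LinearOrder β]
    (S : Fin n → α) (P : Fin m → β) (i : ℕ) : Prop :=
  ∃ h : i + m ≤ n, OrderIsoSeq P (fun j : Fin m => S ⟨i + (j : ℕ), by have := j.isLt; omega⟩)


section Aux
variable {α β ι : Type*} [LinearOrder α] [LinearOrder β]

lemma eq_of_card_filter_lt_eq {V : Finset α} {a b : α} (ha : a ∈ V) (hb : b ∈ V)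
    (h : (V.filter (· < a)).card = (V.filter (· < b)).card) : a = b := by
  have key : ∀ x y : α, x ∈ V → x < y →
      (V.filter (· < x)).card < (V.filter (· < y)).card := by
    intro x y hx hxy
    apply Finset.card_lt_card
    constructor
    · intro v hv
      simp only [Finset.mem_filter] at *
      exact ⟨hv.1, hv.2.trans hxy⟩
    · intro hsub
      have := hsub (by simp [Finset.mem_filter, hx, hxy] : x ∈ V.filter (· < y))
      simp [Finset.mem_filter] at this
  rcases lt_trichotomy a b with hlt | he | hlt
  · exact absurd h (ne_of_lt (key a b ha hlt))
  · exact he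
  · exact absurd h.symm (ne_of_lt (key b a hb hlt))

lemma lt_iff_count {V : Finset α} {x u : α} (hx : x ∈ V) (hxu : x ≠ u) :
    (x < u ↔ (V.filter (· < x)).card < (V.filter (· < u)).card) := by
  constructor
  · intro h
    apply Finset.card_lt_card
    constructor
    · intro v hv
      simp only [Finset.mem_filter] at *
      exact ⟨hv.1, hv.2.trans h⟩
    · intro hsub
      have := hsub (by simp [Finset.mem_filter, hx, h] : x ∈ V.filter (· < u))
      simp [Finset.mem_filter] at this
  · intro hc
    by_contra hnot
    have hux : u < x := lt_of_le_of_ne (not_lt.mp hnot) (Ne.symm hxu)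
    have : V.filter (· < u) ⊆ V.filter (· < x) := by
      intro v hv
      simp only [Finset.mem_filter] at *
      exact ⟨hv.1, hv.2.trans hux⟩
    exact absurd hc (not_lt.mpr (Finset.card_le_card this))

lemma card_image_eq {B : Finset ι} {s : ι → α} {t : ι → β}
    (h : ∀ a ∈ B, ∀ b ∈ B, (s a = s b ↔ t a = t b)) :
    (B.image s).card = (B.image t).card := by
  classical
  refine Finset.card_bij (fun a ha => t (Finset.mem_image.mp ha).choose) ?_ ?_ ?_
  · intro a ha
    exact Finset.mem_image_of_mem t (Finset.mem_image.mp ha).choose_spec.1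
  · intro a₁ ha₁ a₂ ha₂ heq
    obtain ⟨hw1, hs1⟩ := (Finset.mem_image.mp ha₁).choose_spec
    obtain ⟨hw2, hs2⟩ := (Finset.mem_image.mp ha₂).choose_spec
    rw [← hs1, ← hs2]
    exact (h _ hw1 _ hw2).mpr heq
  · intro b hb
    obtain ⟨x, hx, hxb⟩ := Finset.mem_image.mp hb
    refine ⟨s x, Finset.mem_image_of_mem s hx, ?_⟩
    obtain ⟨hw, hs⟩ := (Finset.mem_image.mp (Finset.mem_image_of_mem s hx)).choose_spec
    rw [← hxb]
    exact (h _ hw _ hx).mp hs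

lemma card_filter_lt_image {B : Finset ι} {s : ι → α} {t : ι → β} {u : α} {v : β}
    (h : ∀ a ∈ B, ∀ b ∈ B, (s a = s b ↔ t a = t b))
    (h2 : ∀ a ∈ B, (s a < u ↔ t a < v)) :
    ((B.image s).filter (· < u)).card = ((B.image t).filter (· < v)).card := by
  classical
  have e1 : (B.image s).filter (· < u) = (B.filter fun a => s a < u).image s := by
    ext x
    simp only [Finset.mem_filter, Finset.mem_image]
    constructor
    · rintro ⟨⟨a, ha, rfl⟩, hlt⟩
      exact ⟨a, ⟨ha, hlt⟩, rfl⟩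
    · rintro ⟨a, ⟨ha, hlt⟩, rfl⟩
      exact ⟨⟨a, ha, rfl⟩, hlt⟩
  have e2 : (B.image t).filter (· < v) = (B.filter fun a => t a < v).image t := by
    ext x
    simp only [Finset.mem_filter, Finset.mem_image]
    constructor
    · rintro ⟨⟨a, ha, rfl⟩, hlt⟩
      exact ⟨a, ⟨ha, hlt⟩, rfl⟩
    · rintro ⟨a, ⟨ha, hlt⟩, rfl⟩
      exact ⟨⟨a, ha, rfl⟩, hlt⟩
  have e3 : B.filter (fun a => t a < v) = B.filter (fun a => s a < u) := by
    apply Finset.filter_congr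
    intro a ha
    simp [h2 a ha]
  rw [e1, e2, e3]
  exact card_image_eq (fun a ha b hb =>
    h a (Finset.mem_of_mem_filter a ha) b (Finset.mem_of_mem_filter b hb))

lemma rat_split {a b : ℕ} {p q : Prop} [Decidable p] [Decidable q]
    (h : (a : ℚ) + (if p then 1 else 1/2) = (b : ℚ) + (if q then 1 else 1/2)) :
    a = b ∧ (p ↔ q) := by
  split_ifs at h with hp hq hq
  · refine ⟨?_, iff_of_true hp hq⟩
    have : (a:ℚ) = b := by linarith
    exact_mod_cast this
  · exfalso
    have : ((2 * a + 2 : ℕ) : ℚ) = ((2 * b + 1 : ℕ) : ℚ) := by push_cast; linarith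
    have := Nat.cast_inj.mp this
    omega
  · exfalso
    have : ((2 * a + 1 : ℕ) : ℚ) = ((2 * b + 2 : ℕ) : ℚ) := by push_cast; linarith
    have := Nat.cast_inj.mp this
    omega
  · refine ⟨?_, iff_of_false hp hq⟩
    have : (a:ℚ) = b := by linarith
    exact_mod_cast this

end Aux

section Main
variable {m : ℕ} {α β : Type*} [LinearOrder α] [LinearOrder β]

lemma rankEncode_eq_of_orderIso {s : Fin m → α} {t : Fin m → β}
    (h : OrderIsoSeq s t) (i : Fin m) : rankEncode s i = rankEncode t i := by
  classical
  have heq : ∀ a b : Fin m, (s a = s b ↔ t a = t b) := by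
    intro a b
    rw [le_antisymm_iff, le_antisymm_iff, h a b, h b a]
  have hlt : ∀ a b : Fin m, (s a < s b ↔ t a < t b) := by
    intro a b
    rw [lt_iff_not_ge, lt_iff_not_ge, h b a]
  unfold rankEncode
  have hc := card_filter_lt_image (B := Finset.univ.filter (fun j : Fin m => (j:ℕ) < (i:ℕ)))
    (s := s) (t := t) (u := s i) (v := t i)
    (fun a _ b _ => heq a b) (fun a _ => hlt a i)
  simp only [hc]
  congr 1
  rw [if_congr (exists_congr fun j => and_congr_right fun _ => heq j i) rfl rfl]

lemma orderIso_of_rankEncode_eq {s : Fin m → α} {t : Fin m → β}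
    (h : ∀ i, rankEncode s i = rankEncode t i) : OrderIsoSeq s t := by
  classical
  suffices H : ∀ k, ∀ i j : Fin m, (i:ℕ) < k → (j:ℕ) < k → (s i ≤ s j ↔ t i ≤ t j) by
    intro i j; exact H m i j i.isLt j.isLt
  intro k
  induction k with
  | zero => intro i j hi; omega
  | succ k ih =>
    -- derived comparisons from ih
    have ihlt : ∀ i j : Fin m, (i:ℕ) < k → (j:ℕ) < k → (s i < s j ↔ t i < t j) := by
      intro i j hi hj
      rw [lt_iff_not_ge, lt_iff_not_ge, ih j i hj hi]
    have iheq : ∀ i j : Fin m, (i:ℕ) < k → (j:ℕ) < k → (s i = s j ↔ t i = t j) := by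
      intro i j hi hj
      rw [le_antisymm_iff, le_antisymm_iff, ih i j hi hj, ih j i hj hi]
    -- the key claim, for k < m
    have C : ∀ hk : k < m, ∀ j : Fin m, (j:ℕ) < k →
        ((s j < s ⟨k, hk⟩ ↔ t j < t ⟨k, hk⟩) ∧ (s j = s ⟨k, hk⟩ ↔ t j = t ⟨k, hk⟩)) := by
      intro hk j hj
      set K : Fin m := ⟨k, hk⟩ with hK
      set B : Finset (Fin m) := Finset.univ.filter (fun j : Fin m => (j:ℕ) < k) with hB
      have hBmem : ∀ a : Fin m, a ∈ B ↔ (a:ℕ) < k := by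
        intro a; simp [hB]
      have hsplit := rat_split (by
        have := h K
        unfold rankEncode at this
        exact this)
      have hd : ((B.image s).filter (· < s K)).card = ((B.image t).filter (· < t K)).card := by
        have := hsplit.1
        exact this
      have hf : (∃ j : Fin m, (j:ℕ) < k ∧ s j = s K) ↔ (∃ j : Fin m, (j:ℕ) < k ∧ t j = t K) :=
        hsplit.2
      have hBeq : ∀ a ∈ B, ∀ b ∈ B, (s a = s b ↔ t a = t b) := by
        intro a ha b hb
        exact iheq a b ((hBmem a).mp ha) ((hBmem b).mp hb)
      by_cases hflag : ∃ j0 : Fin m, (j0:ℕ) < k ∧ s j0 = s K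
      · obtain ⟨j0, hj0k, hj0⟩ := hflag
        obtain ⟨j1, hj1k, hj1⟩ := hf.mp ⟨j0, hj0k, hj0⟩
        -- show t j0 = t K
        have hc1 : ((B.image s).filter (· < s j0)).card = ((B.image t).filter (· < t j0)).card :=
          card_filter_lt_image hBeq (fun a ha => ihlt a j0 ((hBmem a).mp ha) hj0k)
        have hc2 : ((B.image t).filter (· < t j0)).card = ((B.image t).filter (· < t K)).card := by
          rw [← hc1, ← hd, hj0]
        have htj0 : t j0 = t K := by
          apply eq_of_card_filter_lt_eq (V := B.image t)
            (Finset.mem_image_of_mem t ((hBmem j0).mpr hj0k)) _ hc2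
          rw [← hj1]
          exact Finset.mem_image_of_mem t ((hBmem j1).mpr hj1k)
        constructor
        · rw [← hj0, ← htj0]
          exact ihlt j j0 hj hj0k
        · rw [← hj0, ← htj0]
          exact iheq j j0 hj hj0k
      · have hflag' : ¬ ∃ j1 : Fin m, (j1:ℕ) < k ∧ t j1 = t K := fun hx => hflag (hf.mpr hx)
        push_neg at hflag' hflag
        have hsne : s j ≠ s K := hflag j hj
        have htne : t j ≠ t K := hflag' j hj
        constructor
        · rw [lt_iff_count (Finset.mem_image_of_mem s ((hBmem j).mpr hj)) hsne,
              lt_iff_count (Finset.mem_image_of_mem t ((hBmem j).mpr hj)) htne]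
          have hcj : ((B.image s).filter (· < s j)).card = ((B.image t).filter (· < t j)).card :=
            card_filter_lt_image hBeq (fun a ha => ihlt a j ((hBmem a).mp ha) hj)
          rw [hcj, hd]
        · exact iff_of_false hsne htne
    -- assemble
    intro i j hi hj
    rcases Nat.lt_succ_iff_lt_or_eq.mp hi with hik | hik
    · rcases Nat.lt_succ_iff_lt_or_eq.mp hj with hjk | hjk
      · exact ih i j hik hjk
      · -- j = k
        have hk : k < m := hjk ▸ j.isLt
        have hjK : j = ⟨k, hk⟩ := Fin.ext hjk
        subst hjK
        obtain ⟨hlt', heq'⟩ := C hk i hik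
        rw [le_iff_lt_or_eq, le_iff_lt_or_eq, hlt', heq']
    · have hk : k < m := hik ▸ i.isLt
      have hiK : i = ⟨k, hk⟩ := Fin.ext hik
      subst hiK
      rcases Nat.lt_succ_iff_lt_or_eq.mp hj with hjk | hjk
      · obtain ⟨hlt', heq'⟩ := C hk j hjk
        rw [← not_lt, ← not_lt, hlt']
      · have hjK : j = ⟨k, hk⟩ := Fin.ext hjk
        subst hjK
        simp

end Main


section Restrict
variable {m : ℕ} {α β : Type*} [LinearOrder α] [LinearOrder β]

lemma rankEncode_restrict {N : ℕ} (s : Fin N → α) (h : m ≤ N) (j : Fin m) :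
    rankEncode s ⟨(j:ℕ), lt_of_lt_of_le j.isLt h⟩ =
      rankEncode (fun k : Fin m => s ⟨(k:ℕ), lt_of_lt_of_le k.isLt h⟩) j := by
  classical
  unfold rankEncode
  have himg : ((Finset.univ : Finset (Fin N)).filter
        (fun j' : Fin N => (j':ℕ) < (j:ℕ))).image s =
      ((Finset.univ : Finset (Fin m)).filter (fun k : Fin m => (k:ℕ) < (j:ℕ))).image
        (fun k : Fin m => s ⟨(k:ℕ), lt_of_lt_of_le k.isLt h⟩) := by
    ext a
    simp only [Finset.mem_image, Finset.mem_filter, Finset.mem_univ, true_and]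
    constructor
    · rintro ⟨j', hj', rfl⟩
      refine ⟨⟨(j':ℕ), hj'.trans j.isLt⟩, hj', rfl⟩
    · rintro ⟨k, hk, rfl⟩
      exact ⟨⟨(k:ℕ), lt_of_lt_of_le k.isLt h⟩, hk, rfl⟩
  have hflag : (∃ j' : Fin N, (j':ℕ) < (j:ℕ) ∧ s j' = s ⟨(j:ℕ), lt_of_lt_of_le j.isLt h⟩) ↔
      (∃ k : Fin m, (k:ℕ) < (j:ℕ) ∧
        s ⟨(k:ℕ), lt_of_lt_of_le k.isLt h⟩ = s ⟨(j:ℕ), lt_of_lt_of_le j.isLt h⟩) := by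
    constructor
    · rintro ⟨j', hj', he⟩
      exact ⟨⟨(j':ℕ), hj'.trans j.isLt⟩, hj', he⟩
    · rintro ⟨k, hk, he⟩
      exact ⟨⟨(k:ℕ), lt_of_lt_of_le k.isLt h⟩, hk, he⟩
  simp only [himg, hflag]

end Restrict

/-- The number of order-preserving occurrences of `P` in `S` equals the number of positions
`i` (with `i + m ≤ n`) at which `E(P)` is a prefix of the rank encoding of the suffix of
`S` starting at `i`. -/
theorem ncard_opOccur_eq_ncard_prefix {n m : ℕ} {α β : Type*} [LinearOrder α] [LinearOrder β]
    (S : Fin n → α) (P : Fin m → β) :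
    {i : ℕ | OPOccurAt S P i}.ncard =
      {i : ℕ | ∃ h : i + m ≤ n, ∀ j : Fin m,
        rankEncode (fun k : Fin (n - i) => S ⟨i + (k : ℕ), by have := k.isLt; omega⟩)
            ⟨(j : ℕ), by have := j.isLt; omega⟩ =
          rankEncode P j}.ncard := by
  congr 1
  ext i
  simp only [Set.mem_setOf_eq, OPOccurAt]
  constructor
  · rintro ⟨h, hiso⟩
    refine ⟨h, fun j => ?_⟩
    have hm : m ≤ n - i := by omega
    have hres := rankEncode_restrict
      (fun k : Fin (n - i) => S ⟨i + (k : ℕ), by have := k.isLt; omega⟩) hm j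
    rw [hres]
    exact rankEncode_eq_of_orderIso (fun a b => (hiso a b).symm) j
  · rintro ⟨h, hpre⟩
    refine ⟨h, ?_⟩
    have hm : m ≤ n - i := by omega
    have hiso : OrderIsoSeq (fun j : Fin m => S ⟨i + (j : ℕ), by have := j.isLt; omega⟩) P := by
      apply orderIso_of_rankEncode_eq
      intro j
      have hres := rankEncode_restrict
        (fun k : Fin (n - i) => S ⟨i + (k : ℕ), by have := k.isLt; omega⟩) hm j
      rw [← hres]
      exact hpre j
    exact fun a b => (hiso a b).symm
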